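/- Let 1, α, αγ be rationally independent, u Sturmian with slope α, b Sturmian over {2,3} with slope γ, and v = colour(u, 1^ω, b). Then the abelian complexity of v satisfies C^{ab}_v(n) = 4 for every n ≥ ⌈1/α⌉, and C^{ab}_v(n) = 3 for 1 ≤ n ≤ ⌊1/α⌋. -/

import Mathlib

open scoped Classical

/-- The factor of length `n` of the sequence `s` starting at position `i`. -/
def fac {A : Type*} (s : ℕ → A) (i n : ℕ) : List A :=
  (List.range n).map (fun j => s (i + j))

/-- Sturmian sequence with slope `α` and intercept `ρ`:
`true` codes letter b (interval `[1-α,1)`), `false` codes letter a. -/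
noncomputable def sturmian (α ρ : ℝ) (n : ℕ) : Bool :=
  if 1 - α ≤ Int.fract (ρ + n * α) then true else false

/-- Sturmian sequence over the alphabet `{2,3}` with slope `γ` and intercept `ρ`. -/
noncomputable def sturmian23 (γ ρ : ℝ) (n : ℕ) : ℕ :=
  if 1 - γ ≤ Int.fract (ρ + n * γ) then 3 else 2

/-- Number of positions `k < n` with `u k = true` (letter `b`). -/
def countB (u : ℕ → Bool) (n : ℕ) : ℕ :=
  ((Finset.range n).filter (fun k => u k = true)).card

/-- Number of positions `k < n` with `u k = false` (letter `a`). -/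
def countA (u : ℕ → Bool) (n : ℕ) : ℕ :=
  ((Finset.range n).filter (fun k => u k = false)).card

/-- Colouring of a binary sequence `u` by sequences `a` and `b`. -/
def colour {A : Type*} (u : ℕ → Bool) (a b : ℕ → A) (n : ℕ) : A :=
  if u n then b (countB u n) else a (countA u n)

/-- key floor splitting lemma -/
lemma floor_fract_add (t x : ℝ) (hx0 : 0 ≤ x) (hx1 : x < 1) :
    ⌊t + x⌋ = ⌊t⌋ + if 1 - Int.fract t ≤ x then 1 else 0 := by
  have hf0 := Int.fract_nonneg t
  have hf1 := Int.fract_lt_one t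
  have h : t + x = (Int.fract t + x) + (⌊t⌋ : ℝ) := by rw [Int.fract]; ring
  rw [h, Int.floor_add_intCast]
  split_ifs with h'
  · rw [show ⌊Int.fract t + x⌋ = 1 from
      Int.floor_eq_iff.2 ⟨by push_cast; linarith, by push_cast; linarith⟩]; ring
  · rw [show ⌊Int.fract t + x⌋ = 0 from
      Int.floor_eq_iff.2 ⟨by push_cast; linarith, by push_cast; linarith⟩]; ring

lemma floor_diff (y c : ℝ) : ⌊y + c⌋ - ⌊y⌋ = ⌊c + Int.fract y⌋ := by
  rw [show y + c = (c + Int.fract y) + (⌊y⌋ : ℝ) by rw [Int.fract]; ring, Int.floor_add_intCast]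
  ring

lemma countB_succ (u : ℕ → Bool) (i : ℕ) :
    countB u (i + 1) = countB u i + if u i then 1 else 0 := by
  unfold countB
  rw [Finset.range_add_one, Finset.filter_insert]
  split_ifs with h
  · rw [Finset.card_insert_of_notMem (by simp)]
  · simp

lemma countB_eq (α ρ : ℝ) (hα : α ∈ Set.Ioo (0:ℝ) 1) (hρ : ρ ∈ Set.Ico (0:ℝ) 1) (i : ℕ) :
    (countB (sturmian α ρ) i : ℤ) = ⌊ρ + i * α⌋ := by
  induction i with
  | zero =>
    simp only [countB, Finset.range_zero, Finset.filter_empty, Finset.card_empty,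
      Nat.cast_zero, Nat.cast_ofNat, mul_zero, zero_mul]
    rw [eq_comm, Int.floor_eq_zero_iff]
    constructor
    · simpa using hρ.1
    · simpa using hρ.2
  | succ i ih =>
    rw [countB_succ]
    have h : ρ + (↑(i+1)) * α = (ρ + i * α) + α := by push_cast; ring
    rw [h, floor_fract_add _ _ hα.1.le hα.2]
    have hcond : sturmian α ρ i = true ↔ 1 - α ≤ Int.fract (ρ + i * α) := by
      simp [sturmian]
    by_cases h' : 1 - α ≤ Int.fract (ρ + i * α)
    · rw [if_pos (hcond.2 h'), if_pos (by linarith : 1 - Int.fract (ρ + ↑i * α) ≤ α)]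
      push_cast; omega
    · rw [if_neg (fun hc => h' (hcond.1 hc)),
        if_neg (fun hc => h' (by linarith : 1 - α ≤ Int.fract (ρ + ↑i * α)))]
      push_cast; omega

lemma counts_eq (α ρ₁ γ ρ₂ : ℝ) (hα : α ∈ Set.Ioo (0:ℝ) 1) (hγ : γ ∈ Set.Ioo (0:ℝ) 1)
    (hρ₁ : ρ₁ ∈ Set.Ico (0:ℝ) 1) (hρ₂ : ρ₂ ∈ Set.Ico (0:ℝ) 1) (i n : ℕ) :
    ((fac (colour (sturmian α ρ₁) (fun _ => 1) (sturmian23 γ ρ₂)) i n).count 1 : ℤ)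
        = n - (⌊ρ₁ + (↑(i+n)) * α⌋ - ⌊ρ₁ + i * α⌋) ∧
    ((fac (colour (sturmian α ρ₁) (fun _ => 1) (sturmian23 γ ρ₂)) i n).count 2 : ℤ)
        = (⌊ρ₁ + (↑(i+n)) * α⌋ - ⌊ρ₁ + i * α⌋)
          - (⌊ρ₂ + (⌊ρ₁ + (↑(i+n)) * α⌋ : ℝ) * γ⌋ - ⌊ρ₂ + (⌊ρ₁ + i * α⌋ : ℝ) * γ⌋) ∧
    ((fac (colour (sturmian α ρ₁) (fun _ => 1) (sturmian23 γ ρ₂)) i n).count 3 : ℤ)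
        = ⌊ρ₂ + (⌊ρ₁ + (↑(i+n)) * α⌋ : ℝ) * γ⌋ - ⌊ρ₂ + (⌊ρ₁ + i * α⌋ : ℝ) * γ⌋ := by
  induction n with
  | zero => simp [fac]
  | succ n ih =>
    obtain ⟨ih1, ih2, ih3⟩ := ih
    set v := colour (sturmian α ρ₁) (fun _ => 1) (sturmian23 γ ρ₂) with hv
    have hfac : fac v i (n+1) = fac v i n ++ [v (i+n)] := by
      simp [fac, List.range_succ]
    set y := ρ₁ + (↑(i+n)) * α with hy
    have hynew : ρ₁ + (↑(i+(n+1))) * α = y + α := by rw [hy]; push_cast; ring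
    have hflr : ⌊y + α⌋ = ⌊y⌋ + if 1 - Int.fract y ≤ α then 1 else 0 :=
      floor_fract_add _ _ hα.1.le hα.2
    have hm : (countB (sturmian α ρ₁) (i+n) : ℤ) = ⌊y⌋ := countB_eq α ρ₁ hα hρ₁ (i+n)
    have hmr : ((countB (sturmian α ρ₁) (i+n) : ℕ) : ℝ) = ((⌊y⌋ : ℤ) : ℝ) := by
      exact_mod_cast congrArg (fun z : ℤ => (z : ℝ)) hm
    by_cases hu : 1 - α ≤ Int.fract y
    · -- letter is a b-letter
      have hut : sturmian α ρ₁ (i+n) = true := by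
        simp only [sturmian]; rw [← hy, if_pos hu]
      have hvv : v (i+n) = sturmian23 γ ρ₂ (countB (sturmian α ρ₁) (i+n)) := by
        simp [hv, colour, hut]
      have hfl1 : ⌊ρ₁ + (↑(i+(n+1))) * α⌋ = ⌊y⌋ + 1 := by
        rw [hynew, hflr, if_pos (by linarith)]
      have harg : ρ₂ + (⌊ρ₁ + (↑(i+(n+1))) * α⌋ : ℝ) * γ = (ρ₂ + (⌊y⌋ : ℝ) * γ) + γ := by
        rw [hfl1]; push_cast; ring
      have hflr2 : ⌊(ρ₂ + (⌊y⌋ : ℝ) * γ) + γ⌋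
          = ⌊ρ₂ + (⌊y⌋ : ℝ) * γ⌋ + if 1 - Int.fract (ρ₂ + (⌊y⌋ : ℝ) * γ) ≤ γ then 1 else 0 :=
        floor_fract_add _ _ hγ.1.le hγ.2
      have hargm : ρ₂ + ((countB (sturmian α ρ₁) (i+n) : ℕ) : ℝ) * γ = ρ₂ + (⌊y⌋ : ℝ) * γ := by
        rw [hmr]
      by_cases hb : 1 - γ ≤ Int.fract (ρ₂ + (⌊y⌋ : ℝ) * γ)
      · have hb3 : v (i+n) = 3 := by
          rw [hvv]; simp only [sturmian23, hargm]; rw [if_pos hb]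
        have hfl2 : ⌊ρ₂ + (⌊ρ₁ + (↑(i+(n+1))) * α⌋ : ℝ) * γ⌋ = ⌊ρ₂ + (⌊y⌋ : ℝ) * γ⌋ + 1 := by
          rw [harg, hflr2, if_pos (by linarith)]
        refine ⟨?_, ?_, ?_⟩
        · rw [hfac, List.count_append, hb3, hfl1, show List.count 1 [3] = 0 by decide]
          push_cast; linarith [ih1]
        · rw [hfac, List.count_append, hb3, hfl2, hfl1, show List.count 2 [3] = 0 by decide]
          push_cast; linarith [ih2]
        · rw [hfac, List.count_append, hb3, hfl2, show List.count 3 [3] = 1 by decide]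
          push_cast; linarith [ih3]
      · have hb2 : v (i+n) = 2 := by
          rw [hvv]; simp only [sturmian23, hargm]; rw [if_neg hb]
        have hfl2 : ⌊ρ₂ + (⌊ρ₁ + (↑(i+(n+1))) * α⌋ : ℝ) * γ⌋ = ⌊ρ₂ + (⌊y⌋ : ℝ) * γ⌋ := by
          rw [harg, hflr2, if_neg (fun hc => hb (by linarith))]; ring
        refine ⟨?_, ?_, ?_⟩
        · rw [hfac, List.count_append, hb2, hfl1, show List.count 1 [2] = 0 by decide]
          push_cast; linarith [ih1]
        · rw [hfac, List.count_append, hb2, hfl2, hfl1, show List.count 2 [2] = 1 by decide]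
          push_cast; linarith [ih2]
        · rw [hfac, List.count_append, hb2, hfl2, show List.count 3 [2] = 0 by decide]
          push_cast; linarith [ih3]
    · -- letter is the a-letter 1
      have hut : sturmian α ρ₁ (i+n) = false := by
        simp only [sturmian]; rw [← hy, if_neg hu]
      have hvv : v (i+n) = 1 := by simp [hv, colour, hut]
      have hfl1 : ⌊ρ₁ + (↑(i+(n+1))) * α⌋ = ⌊y⌋ := by
        rw [hynew, hflr, if_neg (fun hc => hu (by linarith))]; ring
      have hfl2 : ⌊ρ₂ + (⌊ρ₁ + (↑(i+(n+1))) * α⌋ : ℝ) * γ⌋ = ⌊ρ₂ + (⌊y⌋ : ℝ) * γ⌋ := by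
        rw [hfl1]
      refine ⟨?_, ?_, ?_⟩
      · rw [hfac, List.count_append, hvv, hfl1, show List.count 1 [1] = 1 by decide]
        push_cast; linarith [ih1]
      · rw [hfac, List.count_append, hvv, hfl2, hfl1, show List.count 2 [1] = 0 by decide]
        push_cast; linarith [ih2]
      · rw [hfac, List.count_append, hvv, hfl2, show List.count 3 [1] = 0 by decide]
        push_cast; linarith [ih3]

/-- The subgroup of `ℝ × ℝ` generated by `(θ₁, θ₂)` and `ℤ²`. -/
def Lgrp (θ₁ θ₂ : ℝ) : AddSubgroup (ℝ × ℝ) where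
  carrier := {w | ∃ n p q : ℤ, w = ((n:ℝ) * θ₁ + p, (n:ℝ) * θ₂ + q)}
  zero_mem' := ⟨0, 0, 0, by norm_num; rfl⟩
  add_mem' := by
    rintro x y ⟨n, p, q, rfl⟩ ⟨n', p', q', rfl⟩
    refine ⟨n+n', p+p', q+q', ?_⟩
    rw [Prod.ext_iff]
    constructor <;> · simp only [Prod.fst_add, Prod.snd_add]; push_cast; ring
  neg_mem' := by
    rintro x ⟨n, p, q, rfl⟩
    refine ⟨-n, -p, -q, ?_⟩
    rw [Prod.ext_iff]
    constructor <;> · simp only [Prod.fst_neg, Prod.snd_neg]; push_cast; ring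

lemma Lgrp_smul {θ₁ θ₂ : ℝ} {h : ℝ × ℝ} (hh : h ∈ Lgrp θ₁ θ₂) (m : ℤ) :
    (m : ℝ) • h ∈ Lgrp θ₁ θ₂ := by
  obtain ⟨n, p, q, rfl⟩ := hh
  refine ⟨m*n, m*p, m*q, ?_⟩
  rw [Prod.ext_iff]
  constructor <;> · simp only [Prod.smul_fst, Prod.smul_snd, smul_eq_mul]; push_cast; ring

/-- Simultaneous recurrence: some positive multiple of `(θ₁, θ₂)` is close to `ℤ²`. -/
lemma small_elt (θ₁ θ₂ : ℝ) (ε : ℝ) (hε : 0 < ε) :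
    ∃ (m : ℕ) (p q : ℤ), 1 ≤ m ∧ |m*θ₁ - p| < ε ∧ |m*θ₂ - q| < ε := by
  set x : ℕ → ℝ × ℝ := fun k => (Int.fract (k*θ₁), Int.fract (k*θ₂)) with hx
  have hmem : ∀ k, x k ∈ (Set.Icc (0:ℝ) 1 ×ˢ Set.Icc (0:ℝ) 1) := fun k =>
    ⟨⟨Int.fract_nonneg _, (Int.fract_lt_one _).le⟩, ⟨Int.fract_nonneg _, (Int.fract_lt_one _).le⟩⟩
  obtain ⟨a, -, φ, hφ, hconv⟩ := (isCompact_Icc.prod isCompact_Icc).tendsto_subseq hmem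
  rw [Metric.tendsto_atTop] at hconv
  obtain ⟨N, hN⟩ := hconv (ε/2) (by positivity)
  have h1 := hN N le_rfl
  have h2 := hN (N+1) (by omega)
  have hlt : φ N < φ (N+1) := hφ (by omega)
  have hd : dist (x (φ (N+1))) (x (φ N)) < ε := by
    calc dist (x (φ (N+1))) (x (φ N))
        ≤ dist (x (φ (N+1))) a + dist (x (φ N)) a := dist_triangle_right _ _ _
      _ < ε := by simp only [Function.comp] at h1 h2; linarith
  refine ⟨φ (N+1) - φ N, ⌊(φ (N+1) : ℝ)*θ₁⌋ - ⌊(φ N : ℝ)*θ₁⌋,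
    ⌊(φ (N+1) : ℝ)*θ₂⌋ - ⌊(φ N : ℝ)*θ₂⌋, by omega, ?_, ?_⟩
  · have he : (↑(φ (N+1) - φ N) : ℝ)*θ₁ - ↑(⌊(φ (N+1) : ℝ)*θ₁⌋ - ⌊(φ N : ℝ)*θ₁⌋)
        = (x (φ (N+1))).1 - (x (φ N)).1 := by
      simp only [hx, Int.fract]
      rw [Nat.cast_sub hlt.le]
      push_cast
      ring
    rw [he, ← Real.dist_eq]
    calc dist (x (φ (N+1))).1 (x (φ N)).1 ≤ dist (x (φ (N+1))) (x (φ N)) := by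
          rw [Prod.dist_eq]; exact le_max_left _ _
      _ < ε := hd
  · have he : (↑(φ (N+1) - φ N) : ℝ)*θ₂ - ↑(⌊(φ (N+1) : ℝ)*θ₂⌋ - ⌊(φ N : ℝ)*θ₂⌋)
        = (x (φ (N+1))).2 - (x (φ N)).2 := by
      simp only [hx, Int.fract]
      rw [Nat.cast_sub hlt.le]
      push_cast
      ring
    rw [he, ← Real.dist_eq]
    calc dist (x (φ (N+1))).2 (x (φ N)).2 ≤ dist (x (φ (N+1))) (x (φ N)) := by
          rw [Prod.dist_eq]; exact le_max_right _ _
      _ < ε := hd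

/-- The closure of `Lgrp` contains a full line through the origin. -/
lemma line_in_closure (θ₁ θ₂ : ℝ) (hirr : Irrational θ₁) :
    ∃ a : ℝ × ℝ, ‖a‖ = 1 ∧ ∀ t : ℝ, t • a ∈ closure (Lgrp θ₁ θ₂ : Set (ℝ × ℝ)) := by
  have hg : ∀ k : ℕ, ∃ g : ℝ × ℝ, g ∈ Lgrp θ₁ θ₂ ∧ g ≠ 0 ∧ ‖g‖ < 1/(k+1) := by
    intro k
    obtain ⟨m, p, q, hm, h1, h2⟩ := small_elt θ₁ θ₂ (1/(k+1)) (by positivity)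
    refine ⟨(m*θ₁ - p, m*θ₂ - q), ⟨(m:ℤ), -p, -q, by rw [Prod.ext_iff]; constructor <;> (push_cast; ring)⟩, ?_, ?_⟩
    · intro h0
      rw [Prod.ext_iff] at h0
      have h0' : (m:ℝ)*θ₁ - p = 0 := h0.1
      have hm0 : (m:ℝ) ≠ 0 := by positivity
      have : θ₁ = ((p / m : ℚ) : ℝ) := by push_cast; field_simp; linarith [h0']
      exact Rat.not_irrational _ (this ▸ hirr)
    · rw [Prod.norm_def]
      simp only [Real.norm_eq_abs]
      exact max_lt h1 h2
  choose g hgL hgne hgn using hg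
  have hgnorm : ∀ k, ‖g k‖ ≠ 0 := fun k => norm_ne_zero_iff.2 (hgne k)
  set u : ℕ → ℝ × ℝ := fun k => ‖g k‖⁻¹ • g k with hu
  have humem : ∀ k, u k ∈ Metric.sphere (0 : ℝ × ℝ) 1 := fun k => by
    rw [mem_sphere_zero_iff_norm, hu]
    rw [norm_smul, norm_inv, norm_norm, inv_mul_cancel₀ (hgnorm k)]
  obtain ⟨a, ha, φ, hφ, hconv⟩ := (isCompact_sphere (0 : ℝ × ℝ) 1).tendsto_subseq humem
  refine ⟨a, mem_sphere_zero_iff_norm.1 ha, fun t => ?_⟩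
  rw [Metric.mem_closure_iff]
  intro ε hε
  rw [Metric.tendsto_atTop] at hconv
  obtain ⟨N₁, hN₁⟩ := hconv (ε/(2*(|t|+1))) (by positivity)
  obtain ⟨K, hK⟩ := exists_nat_gt (2/ε)
  set k := max N₁ K with hk
  set h := g (φ k) with hh
  have hr : 0 < ‖h‖ := lt_of_le_of_ne (norm_nonneg _) (Ne.symm (hgnorm (φ k)))
  have hsmall : ‖h‖ < ε/2 := by
    have h1 : ‖h‖ < 1/(φ k + 1) := hgn (φ k)
    have h2 : (1:ℝ)/(φ k + 1) ≤ 1/(K + 1) := by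
      apply one_div_le_one_div_of_le (by positivity)
      have hKk : K ≤ φ k := le_trans (le_max_right N₁ K) (hφ.le_apply)
      have : (K:ℝ) ≤ (φ k : ℝ) := by exact_mod_cast hKk
      linarith
    have h3 : (1:ℝ)/(K + 1) < ε/2 := by
      rw [div_lt_div_iff₀ (by positivity) (by norm_num)]
      have h5 : 2/ε < (K:ℝ) := hK
      rw [div_lt_iff₀ hε] at h5
      nlinarith
    linarith
  set m : ℤ := ⌊t/‖h‖⌋ with hm
  refine ⟨(m:ℝ) • h, Lgrp_smul (hgL (φ k)) m, ?_⟩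
  rw [dist_eq_norm]
  have hb1 : ‖t • a - t • (u (φ k))‖ < ε/2 := by
    rw [← smul_sub, norm_smul, Real.norm_eq_abs]
    have hd : ‖a - u (φ k)‖ < ε/(2*(|t|+1)) := by
      rw [norm_sub_rev, ← dist_eq_norm]
      exact hN₁ k (le_max_left _ _)
    calc |t| * ‖a - u (φ k)‖ ≤ |t| * (ε/(2*(|t|+1))) := by
          apply mul_le_mul_of_nonneg_left hd.le (abs_nonneg t)
      _ < ε/2 := by
          have h0 : 0 ≤ |t| := abs_nonneg t
          have hpos : (0:ℝ) < 2*(|t|+1) := by positivity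
          rw [mul_div_assoc', div_lt_div_iff₀ hpos (by norm_num)]
          nlinarith
  have hb2 : ‖t • (u (φ k)) - (m:ℝ) • h‖ < ε/2 := by
    have he : t • (u (φ k)) - (m:ℝ) • h = (t * ‖h‖⁻¹ - m) • h := by
      rw [hu, sub_smul, smul_smul]
    rw [he, norm_smul, Real.norm_eq_abs]
    have hfr : |t * ‖h‖⁻¹ - (m:ℝ)| < 1 := by
      rw [show t * ‖h‖⁻¹ = t/‖h‖ by ring, hm]
      have hfl := Int.floor_le (t/‖h‖)
      have hfl2 := Int.lt_floor_add_one (t/‖h‖)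
      rw [abs_lt]
      constructor <;> linarith
    calc |t * ‖h‖⁻¹ - (m:ℝ)| * ‖h‖ ≤ 1 * ‖h‖ := by
          apply mul_le_mul_of_nonneg_right hfr.le (norm_nonneg _)
      _ < ε/2 := by rw [one_mul]; exact hsmall
  calc ‖t • a - (m:ℝ) • h‖
      ≤ ‖t • a - t • (u (φ k))‖ + ‖t • (u (φ k)) - (m:ℝ) • h‖ := by
        have := dist_triangle (t • a) (t • (u (φ k))) ((m:ℝ) • h)
        simpa [dist_eq_norm] using this
    _ < ε := by linarith

/-- The subgroup of `ℝ` generated by three reals. -/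
def Sgrp (c₁ c₂ c₃ : ℝ) : AddSubgroup ℝ where
  carrier := {x | ∃ n p q : ℤ, x = (n:ℝ)*c₁ + p*c₂ + q*c₃}
  zero_mem' := ⟨0, 0, 0, by norm_num⟩
  add_mem' := by
    rintro x y ⟨n, p, q, rfl⟩ ⟨n', p', q', rfl⟩
    exact ⟨n+n', p+p', q+q', by push_cast; ring⟩
  neg_mem' := by
    rintro x ⟨n, p, q, rfl⟩
    exact ⟨-n, -p, -q, by push_cast; ring⟩

theorem kron2_int (θ₁ θ₂ : ℝ)
    (hindep : ∀ a b c : ℤ, (a:ℝ) + b*θ₁ + c*θ₂ = 0 → a = 0 ∧ b = 0 ∧ c = 0)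
    (z₁ z₂ ε : ℝ) (hε : 0 < ε) :
    ∃ (n p q : ℤ), |n*θ₁ + p - z₁| < ε ∧ |n*θ₂ + q - z₂| < ε := by
  have hirr : Irrational θ₁ := by
    rw [Irrational]
    rintro ⟨r, hr⟩
    have h0 : ((-r.num : ℤ):ℝ) + (r.den:ℤ)*θ₁ + (0:ℤ)*θ₂ = 0 := by
      rw [← hr]
      push_cast
      rw [Rat.cast_def]
      have hden : ((r.den:ℝ)) ≠ 0 := by positivity
      field_simp
      ring
    have := (hindep _ _ _ h0).2.1
    have hd := r.den_nz
    omega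
  obtain ⟨a, hanorm, hline⟩ := line_in_closure θ₁ θ₂ hirr
  have hane : ¬(a.1 = 0 ∧ a.2 = 0) := by
    rintro ⟨h1, h2⟩
    have : a = 0 := Prod.ext h1 h2
    rw [this, norm_zero] at hanorm
    norm_num at hanorm
  rcases AddSubgroup.dense_or_cyclic (Sgrp (a.1*θ₂ - a.2*θ₁) (-a.2) (a.1)) with hdense | ⟨c, hc⟩
  · -- dense case
    have hρ : (1:ℝ) ≤ a.1^2 + a.2^2 := by
      have hmax : max |a.1| |a.2| = 1 := by
        rw [← hanorm, Prod.norm_def]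
        simp [Real.norm_eq_abs]
      rcases max_choice |a.1| |a.2| with h | h <;> rw [h] at hmax <;>
        nlinarith [sq_nonneg a.1, sq_nonneg a.2, sq_abs a.1, sq_abs a.2]
    set ρ : ℝ := a.1^2 + a.2^2 with hρdef
    have hρ0 : ρ ≠ 0 := by intro h; rw [h] at hρ; norm_num at hρ
    set s : ℝ × ℝ → ℝ := fun w => a.1*w.2 - a.2*w.1 with hs
    obtain ⟨y, hyS, hy⟩ := Metric.mem_closure_iff.1 (hdense (s (z₁, z₂))) (ε/2) (by positivity)
    obtain ⟨n, p, q, rfl⟩ := hyS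
    set g : ℝ × ℝ := ((n:ℝ)*θ₁ + p, (n:ℝ)*θ₂ + q) with hgdef
    have hgL : g ∈ Lgrp θ₁ θ₂ := ⟨n, p, q, rfl⟩
    have hsg : s g = (n:ℝ)*(a.1*θ₂ - a.2*θ₁) + p*(-a.2) + q*a.1 := by
      rw [hs]; simp only [hgdef]; ring
    set w : ℝ × ℝ := (z₁, z₂) - g with hw
    set t : ℝ := (w.1*a.1 + w.2*a.2)/ρ with ht
    have hdecomp : ((z₁, z₂) : ℝ × ℝ) = (g + t • a) + ((s w)/ρ) • (-a.2, a.1) := by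
      rw [Prod.ext_iff]
      constructor <;>
      · simp only [Prod.fst_add, Prod.snd_add, Prod.smul_fst, Prod.smul_snd, smul_eq_mul,
          ht, hs, hw, Prod.fst_sub, Prod.snd_sub]
        field_simp
        ring
    have hclose : g + t • a ∈ closure ((Lgrp θ₁ θ₂ : Set (ℝ × ℝ))) := by
      have h2 : g + t • a ∈ (Lgrp θ₁ θ₂).topologicalClosure :=
        AddSubgroup.add_mem _ ((Lgrp θ₁ θ₂).le_topologicalClosure hgL) (hline t)
      exact h2
    have hbnorm : ‖((-a.2, a.1) : ℝ × ℝ)‖ = 1 := by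
      rw [Prod.norm_def] at hanorm ⊢
      simp only [Real.norm_eq_abs] at hanorm ⊢
      rw [abs_neg, max_comm]
      exact hanorm
    have hdist1 : dist ((z₁, z₂) : ℝ × ℝ) (g + t • a) < ε/2 := by
      rw [dist_eq_norm]
      calc ‖((z₁, z₂) : ℝ × ℝ) - (g + t • a)‖ = ‖((s w)/ρ) • ((-a.2, a.1) : ℝ × ℝ)‖ := by
            rw [hdecomp]; rw [add_sub_cancel_left]
        _ = |s w|/ρ := by
            rw [norm_smul, hbnorm, mul_one, Real.norm_eq_abs, abs_div,
              abs_of_pos (by linarith : (0:ℝ) < ρ)]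
        _ ≤ |s w| := by
            apply div_le_self (abs_nonneg _) hρ
        _ < ε/2 := by
            have : s w = s (z₁, z₂) - s g := by rw [hs, hw]; simp; ring
            rw [this, hsg, ← Real.dist_eq]
            exact hy
    obtain ⟨l, hlL, hl⟩ := Metric.mem_closure_iff.1 hclose (ε/2) (by positivity)
    obtain ⟨n', p', q', rfl⟩ := hlL
    refine ⟨n', p', q', ?_, ?_⟩
    · have := dist_triangle ((z₁, z₂) : ℝ × ℝ) (g + t • a) ((n':ℝ)*θ₁ + p', (n':ℝ)*θ₂ + q')
      have hco : dist z₁ ((n':ℝ)*θ₁ + p') ≤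
          dist ((z₁, z₂) : ℝ × ℝ) ((n':ℝ)*θ₁ + p', (n':ℝ)*θ₂ + q') := by
        rw [Prod.dist_eq]; exact le_max_left _ _
      rw [Real.dist_eq] at hco
      rw [abs_sub_comm]
      linarith
    · have := dist_triangle ((z₁, z₂) : ℝ × ℝ) (g + t • a) ((n':ℝ)*θ₁ + p', (n':ℝ)*θ₂ + q')
      have hco : dist z₂ ((n':ℝ)*θ₂ + q') ≤
          dist ((z₁, z₂) : ℝ × ℝ) ((n':ℝ)*θ₁ + p', (n':ℝ)*θ₂ + q') := by
        rw [Prod.dist_eq]; exact le_max_right _ _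
      rw [Real.dist_eq] at hco
      rw [abs_sub_comm]
      linarith
  · -- cyclic case: contradiction
    exfalso
    have m1 : (-a.2) ∈ Sgrp (a.1*θ₂ - a.2*θ₁) (-a.2) (a.1) := ⟨0, 1, 0, by norm_num⟩
    have m2 : a.1 ∈ Sgrp (a.1*θ₂ - a.2*θ₁) (-a.2) (a.1) := ⟨0, 0, 1, by norm_num⟩
    have m3 : (a.1*θ₂ - a.2*θ₁) ∈ Sgrp (a.1*θ₂ - a.2*θ₁) (-a.2) (a.1) := ⟨1, 0, 0, by norm_num⟩
    rw [hc, AddSubgroup.mem_closure_singleton] at m1 m2 m3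
    obtain ⟨k₁, hk₁⟩ := m1
    obtain ⟨k₂, hk₂⟩ := m2
    obtain ⟨k₃, hk₃⟩ := m3
    rw [zsmul_eq_mul] at hk₁ hk₂ hk₃
    have hcne : c ≠ 0 := by
      rintro rfl
      rw [mul_zero] at hk₁ hk₂
      exact hane ⟨hk₂.symm, by linarith⟩
    have hcomb : c * (((-k₃ : ℤ):ℝ) + k₁*θ₁ + k₂*θ₂) = 0 := by
      push_cast
      linear_combination θ₁*hk₁ + θ₂*hk₂ - hk₃
    have h0 : ((-k₃ : ℤ):ℝ) + k₁*θ₁ + k₂*θ₂ = 0 := by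
      rcases mul_eq_zero.1 hcomb with h | h
      · exact absurd h hcne
      · exact h
    obtain ⟨-, h1, h2⟩ := hindep _ _ _ h0
    rw [h1] at hk₁
    rw [h2] at hk₂
    push_cast at hk₁ hk₂
    rw [zero_mul] at hk₁ hk₂
    exact hane ⟨hk₂.symm, by linarith⟩

theorem kron2_nat (θ₁ θ₂ : ℝ)
    (hindep : ∀ a b c : ℤ, (a:ℝ) + b*θ₁ + c*θ₂ = 0 → a = 0 ∧ b = 0 ∧ c = 0)
    (z₁ z₂ ε : ℝ) (hε : 0 < ε) :
    ∃ (m : ℕ) (p q : ℤ), |m*θ₁ + p - z₁| < ε ∧ |m*θ₂ + q - z₂| < ε := by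
  obtain ⟨n, p, q, h1, h2⟩ := kron2_int θ₁ θ₂ hindep z₁ z₂ (ε/2) (by positivity)
  rcases le_or_gt 0 n with hn | hn
  · refine ⟨n.toNat, p, q, ?_, ?_⟩ <;>
      · rw [show ((n.toNat : ℕ):ℝ) = (n:ℝ) by
          have := Int.toNat_of_nonneg hn
          exact_mod_cast congrArg (fun z : ℤ => (z:ℝ)) this]
        linarith [h1, h2]
  · set K : ℕ := (-n).toNat with hK
    have hK1 : 1 ≤ K := by omega
    have hKn : (K:ℤ) = -n := by omega
    obtain ⟨m, p', q', hm1, hs1, hs2⟩ := small_elt θ₁ θ₂ (ε/(2*(K+1))) (by positivity)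
    have hE : (0:ℤ) ≤ n + K*m := by
      have h5 : (K:ℤ)*1 ≤ (K:ℤ)*m := by
        apply mul_le_mul_of_nonneg_left (by exact_mod_cast hm1) (by positivity)
      omega
    have hcast : (((n + K*m).toNat : ℕ) : ℝ) = (n:ℝ) + (K:ℝ)*(m:ℝ) := by
      have h6 : ((n + K*m).toNat : ℤ) = n + K*m := Int.toNat_of_nonneg hE
      have h7 : (((n + K*m).toNat : ℕ) : ℝ) = ((n + (K:ℤ)*m : ℤ) : ℝ) := by exact_mod_cast congrArg Int.cast h6
      rw [h7]; push_cast; ring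
    have hKpos : (0:ℝ) < (K:ℝ) := by exact_mod_cast hK1
    have hKs : (K:ℝ)*(ε/(2*(K+1))) < ε/2 := by
      rw [mul_div_assoc', div_lt_div_iff₀ (by positivity) (by norm_num)]
      nlinarith
    have main : ∀ (θ z : ℝ) (pp qq : ℤ), |(n:ℝ)*θ + pp - z| < ε/2 → |(m:ℝ)*θ - qq| < ε/(2*(K+1)) →
        |(↑((n + K*m).toNat) : ℝ)*θ + (↑(pp - K*qq) : ℝ) - z| < ε := by
      intro θ z pp qq ha hb
      rw [hcast]
      have he : ((n:ℝ) + (K:ℝ)*(m:ℝ))*θ + (↑(pp - (K:ℤ)*qq) : ℝ) - z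
          = ((n:ℝ)*θ + pp - z) + (K:ℝ)*((m:ℝ)*θ - qq) := by push_cast; ring
      rw [he]
      calc |((n:ℝ)*θ + pp - z) + (K:ℝ)*((m:ℝ)*θ - qq)|
          ≤ |(n:ℝ)*θ + pp - z| + |(K:ℝ)*((m:ℝ)*θ - qq)| := abs_add_le _ _
        _ < ε/2 + ε/2 := by
            apply add_lt_add ha
            rw [abs_mul, abs_of_pos hKpos]
            calc (K:ℝ) * |(m:ℝ)*θ - qq| ≤ (K:ℝ)*(ε/(2*(K+1))) :=
                  mul_le_mul_of_nonneg_left hb.le hKpos.le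
              _ < ε/2 := hKs
        _ = ε := by ring
    exact ⟨(n + K*m).toNat, p - K*p', q - K*q', main θ₁ z₁ p p' h1 hs1, main θ₂ z₂ q q' h2 hs2⟩

/-- Joint density of the pair of fractional parts driving the abelian complexity. -/
lemma density_pair (α ρ₁ γ ρ₂ : ℝ) (hα : α ∈ Set.Ioo (0:ℝ) 1) (hγ : γ ∈ Set.Ioo (0:ℝ) 1)
    (hindep : ∀ p q r : ℚ, (p : ℝ) + q * α + r * (α * γ) = 0 → p = 0 ∧ q = 0 ∧ r = 0)
    (a b c d : ℝ) (ha : 0 ≤ a) (hab : a < b) (hb : b ≤ 1) (hc : 0 ≤ c) (hcd : c < d) (hd : d ≤ 1) :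
    ∃ i : ℕ, Int.fract (ρ₁ + i*α) ∈ Set.Ioo a b ∧
      Int.fract (ρ₂ + (⌊ρ₁ + i*α⌋ : ℝ)*γ) ∈ Set.Ioo c d := by
  have hindepZ : ∀ A B C : ℤ, (A:ℝ) + B*α + C*(α*γ) = 0 → A = 0 ∧ B = 0 ∧ C = 0 := by
    intro A B C h
    have h' : ((A:ℚ):ℝ) + (B:ℚ)*α + (C:ℚ)*(α*γ) = 0 := by exact_mod_cast h
    obtain ⟨e1, e2, e3⟩ := hindep _ _ _ h'
    exact ⟨by exact_mod_cast e1, by exact_mod_cast e2, by exact_mod_cast e3⟩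
  set x₀ : ℝ := (a+b)/2 with hx₀
  set y₀ : ℝ := (c+d)/2 with hy₀
  have hx₀0 : 0 < x₀ := by rw [hx₀]; linarith
  have hx₀1 : x₀ < 1 := by rw [hx₀]; linarith
  have hy₀0 : 0 < y₀ := by rw [hy₀]; linarith
  have hy₀1 : y₀ < 1 := by rw [hy₀]; linarith
  obtain ⟨ε0, hε0, eA, eB, eC, eD, eE, eF⟩ : ∃ ε0 : ℝ, 0 < ε0 ∧ ε0 ≤ (b-a)/2 ∧ ε0 ≤ (d-c)/2 ∧
      ε0 ≤ x₀ ∧ ε0 ≤ 1 - x₀ ∧ ε0 ≤ y₀ ∧ ε0 ≤ 1 - y₀ := by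
    refine ⟨min (min ((b-a)/2) ((d-c)/2)) (min (min x₀ (1-x₀)) (min y₀ (1-y₀))), ?_, ?_, ?_, ?_, ?_, ?_, ?_⟩
    · apply lt_min (lt_min (by linarith) (by linarith))
      exact lt_min (lt_min hx₀0 (by linarith)) (lt_min hy₀0 (by linarith))
    · exact le_trans (min_le_left _ _) (min_le_left _ _)
    · exact le_trans (min_le_left _ _) (min_le_right _ _)
    · exact le_trans (min_le_right _ _) (le_trans (min_le_left _ _) (min_le_left _ _))
    · exact le_trans (min_le_right _ _) (le_trans (min_le_left _ _) (min_le_right _ _))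
    · exact le_trans (min_le_right _ _) (le_trans (min_le_right _ _) (min_le_left _ _))
    · exact le_trans (min_le_right _ _) (le_trans (min_le_right _ _) (min_le_right _ _))
  obtain ⟨i, p, q, h1, h2⟩ := kron2_nat α (α*γ) hindepZ (x₀ - ρ₁) (y₀ - ρ₂ - ρ₁*γ + γ*x₀)
    (ε0/3) (by positivity)
  set η₁ : ℝ := (i:ℝ)*α + p - (x₀ - ρ₁) with hη₁
  set η₂ : ℝ := (i:ℝ)*(α*γ) + q - (y₀ - ρ₂ - ρ₁*γ + γ*x₀) with hη₂
  have hb1 : |η₁| < ε0/3 := h1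
  have hb2 : |η₂| < ε0/3 := h2
  rw [abs_lt] at hb1 hb2
  obtain ⟨hb1a, hb1b⟩ := hb1
  obtain ⟨hb2a, hb2b⟩ := hb2
  have hx : ρ₁ + i*α = ((-p : ℤ):ℝ) + (x₀ + η₁) := by rw [hη₁]; push_cast; ring
  have hxmem : 0 ≤ x₀ + η₁ ∧ x₀ + η₁ < 1 := ⟨by linarith, by linarith⟩
  have hxval : Int.fract (ρ₁ + i*α) = x₀ + η₁ := by
    rw [hx, Int.fract_intCast_add, Int.fract_eq_self.2 hxmem]
  have hfloor : (⌊ρ₁ + i*α⌋ : ℝ) = -p := by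
    have h3 := Int.self_sub_fract (ρ₁ + i*α)
    rw [hxval] at h3
    rw [← h3, hx]
    push_cast
    ring
  have hγa : (0:ℝ) < γ := hγ.1
  have hγb : γ < 1 := hγ.2
  have hgabs : |γ*η₁| < ε0/3 := by
    rw [abs_mul, abs_of_pos hγa]
    calc γ * |η₁| ≤ 1 * |η₁| := mul_le_mul_of_nonneg_right hγb.le (abs_nonneg _)
      _ < ε0/3 := by rw [one_mul]; exact h1
  rw [abs_lt] at hgabs
  obtain ⟨hg1, hg2⟩ := hgabs
  have habs : -(2*(ε0/3)) < η₂ - γ*η₁ ∧ η₂ - γ*η₁ < 2*(ε0/3) := ⟨by linarith, by linarith⟩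
  obtain ⟨habs1, habs2⟩ := habs
  have hyarg : ρ₂ + (⌊ρ₁ + i*α⌋ : ℝ)*γ = ((-q : ℤ):ℝ) + (y₀ + (η₂ - γ*η₁)) := by
    rw [hfloor, hη₂, hη₁]
    push_cast
    ring
  clear_value η₁ η₂
  have hymem : 0 ≤ y₀ + (η₂ - γ*η₁) ∧ y₀ + (η₂ - γ*η₁) < 1 := ⟨by linarith, by linarith⟩
  have hyval : Int.fract (ρ₂ + (⌊ρ₁ + i*α⌋ : ℝ)*γ) = y₀ + (η₂ - γ*η₁) := by
    rw [hyarg, Int.fract_intCast_add, Int.fract_eq_self.2 hymem]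
  refine ⟨i, ?_, ?_⟩
  · rw [hxval]
    constructor <;> [skip; skip] <;> rw [hx₀] <;> linarith
  · rw [hyval]
    constructor <;> [skip; skip] <;> rw [hy₀] <;> linarith

lemma key_counts (α ρ₁ γ ρ₂ : ℝ) (hα : α ∈ Set.Ioo (0:ℝ) 1) (hγ : γ ∈ Set.Ioo (0:ℝ) 1)
    (hρ₁ : ρ₁ ∈ Set.Ico (0:ℝ) 1) (hρ₂ : ρ₂ ∈ Set.Ico (0:ℝ) 1) (i n : ℕ) :
    ∃ K J : ℤ,
      ((fac (colour (sturmian α ρ₁) (fun _ => 1) (sturmian23 γ ρ₂)) i n).count 1 : ℤ) = n - K ∧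
      ((fac (colour (sturmian α ρ₁) (fun _ => 1) (sturmian23 γ ρ₂)) i n).count 2 : ℤ) = K - J ∧
      ((fac (colour (sturmian α ρ₁) (fun _ => 1) (sturmian23 γ ρ₂)) i n).count 3 : ℤ) = J ∧
      K = ⌊(n:ℝ)*α⌋ + (if 1 - Int.fract ((n:ℝ)*α) ≤ Int.fract (ρ₁ + i*α) then 1 else 0) ∧
      J = ⌊(K:ℝ)*γ + Int.fract (ρ₂ + (⌊ρ₁ + i*α⌋:ℝ)*γ)⌋ := by
  obtain ⟨h1, h2, h3⟩ := counts_eq α ρ₁ γ ρ₂ hα hγ hρ₁ hρ₂ i n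
  refine ⟨⌊ρ₁ + (↑(i+n):ℝ)*α⌋ - ⌊ρ₁ + i*α⌋,
    ⌊ρ₂ + (⌊ρ₁ + (↑(i+n):ℝ)*α⌋:ℝ)*γ⌋ - ⌊ρ₂ + (⌊ρ₁ + i*α⌋:ℝ)*γ⌋, h1, h2, h3, ?_, ?_⟩
  · have e1 : ρ₁ + (↑(i+n):ℝ)*α = (ρ₁ + i*α) + (n:ℝ)*α := by push_cast; ring
    rw [e1, floor_diff]
    exact floor_fract_add ((n:ℝ)*α) _ (Int.fract_nonneg _) (Int.fract_lt_one _)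
  · have e2 : ρ₂ + (⌊ρ₁ + (↑(i+n):ℝ)*α⌋:ℝ)*γ
        = (ρ₂ + (⌊ρ₁ + i*α⌋:ℝ)*γ)
          + ((⌊ρ₁ + (↑(i+n):ℝ)*α⌋ - ⌊ρ₁ + i*α⌋ : ℤ):ℝ)*γ := by
      push_cast
      ring
    rw [e2, floor_diff]

lemma fract_na_pos (α γ : ℝ)
    (hindep : ∀ p q r : ℚ, (p : ℝ) + q * α + r * (α * γ) = 0 → p = 0 ∧ q = 0 ∧ r = 0)
    (n : ℕ) (hn : 1 ≤ n) : 0 < Int.fract ((n:ℝ)*α) := by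
  rcases lt_or_eq_of_le (Int.fract_nonneg ((n:ℝ)*α)) with h | h
  · exact h
  · exfalso
    have hz : (n:ℝ)*α = (⌊(n:ℝ)*α⌋ : ℝ) := by
      have := Int.self_sub_fract ((n:ℝ)*α)
      rw [← h] at this
      linarith
    have h0 := hindep (-(⌊(n:ℝ)*α⌋ : ℚ)) (n:ℚ) 0 (by push_cast; rw [← hz]; ring)
    have h1 : (n:ℚ) = 0 := h0.2.1
    have : n = 0 := by exact_mod_cast h1
    omega

lemma fract_kg_pos (α γ : ℝ)
    (hindep : ∀ p q r : ℚ, (p : ℝ) + q * α + r * (α * γ) = 0 → p = 0 ∧ q = 0 ∧ r = 0)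
    (k : ℤ) (hk : 1 ≤ k) : 0 < Int.fract ((k:ℝ)*γ) := by
  rcases lt_or_eq_of_le (Int.fract_nonneg ((k:ℝ)*γ)) with h | h
  · exact h
  · exfalso
    have hz : (k:ℝ)*γ = (⌊(k:ℝ)*γ⌋ : ℝ) := by
      have := Int.self_sub_fract ((k:ℝ)*γ)
      rw [← h] at this
      linarith
    have h0 := hindep 0 (⌊(k:ℝ)*γ⌋ : ℚ) (-(k:ℚ)) (by push_cast; rw [← hz]; ring)
    have h2 : -(k:ℚ) = 0 := h0.2.2
    have h1 : (k:ℚ) = 0 := by linarith [neg_eq_zero.1 h2]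
    have : k = 0 := by exact_mod_cast h1
    omega

theorem stmt_12 (α ρ₁ γ ρ₂ : ℝ) (hα : α ∈ Set.Ioo (0:ℝ) 1) (hγ : γ ∈ Set.Ioo (0:ℝ) 1)
    (hρ₁ : ρ₁ ∈ Set.Ico (0:ℝ) 1) (hρ₂ : ρ₂ ∈ Set.Ico (0:ℝ) 1)
    (hindep : ∀ p q r : ℚ, (p : ℝ) + q * α + r * (α * γ) = 0 → p = 0 ∧ q = 0 ∧ r = 0)
    (n : ℕ) :
    (n ≥ ⌈(1 : ℝ) / α⌉₊ →
      {p : ℕ × ℕ × ℕ | ∃ i,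
          p = ((fac (colour (sturmian α ρ₁) (fun _ => 1) (sturmian23 γ ρ₂)) i n).count 1,
               (fac (colour (sturmian α ρ₁) (fun _ => 1) (sturmian23 γ ρ₂)) i n).count 2,
               (fac (colour (sturmian α ρ₁) (fun _ => 1) (sturmian23 γ ρ₂)) i n).count 3)}.ncard = 4) ∧
    (1 ≤ n → n ≤ ⌊(1 : ℝ) / α⌋₊ →
      {p : ℕ × ℕ × ℕ | ∃ i,
          p = ((fac (colour (sturmian α ρ₁) (fun _ => 1) (sturmian23 γ ρ₂)) i n).count 1,
               (fac (colour (sturmian α ρ₁) (fun _ => 1) (sturmian23 γ ρ₂)) i n).count 2,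
               (fac (colour (sturmian α ρ₁) (fun _ => 1) (sturmian23 γ ρ₂)) i n).count 3)}.ncard = 3) := by
  have hα0 := hα.1
  have hα1 := hα.2
  have hγ0 := hγ.1
  have hγ1 := hγ.2
  constructor
  · -- the case n ≥ ⌈1/α⌉
    intro hn
    have hn1 : 1 ≤ n := le_trans (Nat.ceil_pos.2 (by positivity : (0:ℝ) < 1/α)) hn
    have hna : (1/α : ℝ) ≤ (n:ℝ) := Nat.ceil_le.1 hn
    have hnα1 : 1 ≤ (n:ℝ)*α := by
      have h := mul_le_mul_of_nonneg_right hna hα0.le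
      rwa [one_div_mul_cancel (ne_of_gt hα0)] at h
    have hnpos : (0:ℝ) < n := by exact_mod_cast hn1
    have hnα2 : (n:ℝ)*α < n := by nlinarith
    have hk₀1 : 1 ≤ ⌊(n:ℝ)*α⌋ := Int.le_floor.2 (by exact_mod_cast hnα1)
    have hk₀n : ⌊(n:ℝ)*α⌋ < (n:ℤ) := Int.floor_lt.2 (by exact_mod_cast hnα2)
    set k₀ : ℤ := ⌊(n:ℝ)*α⌋ with hk₀
    have hfn0 : 0 < Int.fract ((n:ℝ)*α) := fract_na_pos α γ hindep n hn1
    have hfn1 : Int.fract ((n:ℝ)*α) < 1 := Int.fract_lt_one _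
    set fn : ℝ := Int.fract ((n:ℝ)*α) with hfn
    have hcast1 : (1:ℝ) ≤ (k₀:ℝ) := by exact_mod_cast hk₀1
    set j₀ : ℤ := ⌊(k₀:ℝ)*γ⌋ with hj₀
    set j₁ : ℤ := ⌊((k₀:ℝ)+1)*γ⌋ with hj₁
    have hj₀0 : 0 ≤ j₀ := Int.floor_nonneg.2 (by nlinarith)
    have hj₀k : j₀ < k₀ := by
      rw [hj₀, Int.floor_lt]
      nlinarith
    have hj₁0 : 0 ≤ j₁ := Int.floor_nonneg.2 (by nlinarith)
    have hj₁k : j₁ < k₀ + 1 := by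
      rw [hj₁, Int.floor_lt]
      push_cast
      nlinarith
    set f₀ : ℝ := Int.fract ((k₀:ℝ)*γ) with hf₀
    set f₁ : ℝ := Int.fract (((k₀:ℝ)+1)*γ) with hf₁
    have hf₀0 : 0 < f₀ := fract_kg_pos α γ hindep k₀ hk₀1
    have hf₁0 : 0 < f₁ := by
      have h := fract_kg_pos α γ hindep (k₀+1) (by omega)
      rwa [show ((k₀+1 : ℤ):ℝ) = (k₀:ℝ)+1 by push_cast; ring] at h
    have hf₀1 : f₀ < 1 := Int.fract_lt_one _
    have hf₁1 : f₁ < 1 := Int.fract_lt_one _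
    set A : ℕ × ℕ × ℕ := (((n:ℤ) - k₀).toNat, (k₀ - j₀).toNat, j₀.toNat) with hA
    set B : ℕ × ℕ × ℕ := (((n:ℤ) - k₀).toNat, (k₀ - j₀ - 1).toNat, (j₀+1).toNat) with hB
    set C : ℕ × ℕ × ℕ := (((n:ℤ) - k₀ - 1).toNat, (k₀ + 1 - j₁).toNat, j₁.toNat) with hC
    set D : ℕ × ℕ × ℕ := (((n:ℤ) - k₀ - 1).toNat, (k₀ - j₁).toNat, (j₁+1).toNat) with hD
    have hset : {p : ℕ × ℕ × ℕ | ∃ i,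
          p = ((fac (colour (sturmian α ρ₁) (fun _ => 1) (sturmian23 γ ρ₂)) i n).count 1,
               (fac (colour (sturmian α ρ₁) (fun _ => 1) (sturmian23 γ ρ₂)) i n).count 2,
               (fac (colour (sturmian α ρ₁) (fun _ => 1) (sturmian23 γ ρ₂)) i n).count 3)}
        = {A, B, C, D} := by
      ext pp
      simp only [Set.mem_setOf_eq, Set.mem_insert_iff, Set.mem_singleton_iff]
      constructor
      · rintro ⟨i, rfl⟩
        obtain ⟨K, J, hc1, hc2, hc3, hK, hJ⟩ := key_counts α ρ₁ γ ρ₂ hα hγ hρ₁ hρ₂ i n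
        rw [← hk₀, ← hfn] at hK
        have hy0 : (0:ℝ) ≤ Int.fract (ρ₂ + (⌊ρ₁ + i*α⌋:ℝ)*γ) := Int.fract_nonneg _
        have hy1 : Int.fract (ρ₂ + (⌊ρ₁ + i*α⌋:ℝ)*γ) < 1 := Int.fract_lt_one _
        by_cases hx : 1 - fn ≤ Int.fract (ρ₁ + i*α)
        · rw [if_pos hx] at hK
          have hKr : (K:ℝ) = (k₀:ℝ) + 1 := by rw [hK]; push_cast; ring
          rw [hKr, floor_fract_add _ _ hy0 hy1, ← hj₁, ← hf₁] at hJ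
          by_cases hy : 1 - f₁ ≤ Int.fract (ρ₂ + (⌊ρ₁ + i*α⌋:ℝ)*γ)
          · rw [if_pos hy] at hJ
            right; right; right
            rw [hD]
            simp only [Prod.mk.injEq]
            refine ⟨?_, ?_, ?_⟩ <;> omega
          · rw [if_neg hy] at hJ
            right; right; left
            rw [hC]
            simp only [Prod.mk.injEq]
            refine ⟨?_, ?_, ?_⟩ <;> omega
        · rw [if_neg hx] at hK
          have hKr : (K:ℝ) = (k₀:ℝ) := by rw [hK]; push_cast; ring
          rw [hKr, floor_fract_add _ _ hy0 hy1, ← hj₀, ← hf₀] at hJ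
          by_cases hy : 1 - f₀ ≤ Int.fract (ρ₂ + (⌊ρ₁ + i*α⌋:ℝ)*γ)
          · rw [if_pos hy] at hJ
            right; left
            rw [hB]
            simp only [Prod.mk.injEq]
            refine ⟨?_, ?_, ?_⟩ <;> omega
          · rw [if_neg hy] at hJ
            left
            rw [hA]
            simp only [Prod.mk.injEq]
            refine ⟨?_, ?_, ?_⟩ <;> omega
      · have main : ∀ a b c d : ℝ, 0 ≤ a → a < b → b ≤ 1 → 0 ≤ c → c < d → d ≤ 1 →
            ∃ i : ℕ, Int.fract (ρ₁ + i*α) ∈ Set.Ioo a b ∧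
              Int.fract (ρ₂ + (⌊ρ₁ + i*α⌋ : ℝ)*γ) ∈ Set.Ioo c d :=
          fun a b c d h1 h2 h3 h4 h5 h6 =>
            density_pair α ρ₁ γ ρ₂ hα hγ hindep a b c d h1 h2 h3 h4 h5 h6
        rintro (rfl | rfl | rfl | rfl)
        · obtain ⟨i, hxI, hyI⟩ := main 0 (1-fn) 0 (1-f₀) le_rfl (by linarith) (by linarith)
            le_rfl (by linarith) (by linarith)
          obtain ⟨K, J, hc1, hc2, hc3, hK, hJ⟩ := key_counts α ρ₁ γ ρ₂ hα hγ hρ₁ hρ₂ i n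
          rw [← hk₀, ← hfn] at hK
          rw [if_neg (by linarith [hxI.2] : ¬(1 - fn ≤ Int.fract (ρ₁ + i*α)))] at hK
          have hKr : (K:ℝ) = (k₀:ℝ) := by rw [hK]; push_cast; ring
          rw [hKr, floor_fract_add _ _ (Int.fract_nonneg _) (Int.fract_lt_one _),
            ← hj₀, ← hf₀] at hJ
          rw [if_neg (by linarith [hyI.2])] at hJ
          refine ⟨i, ?_⟩
          rw [hA]
          simp only [Prod.mk.injEq]
          refine ⟨?_, ?_, ?_⟩ <;> omega
        · obtain ⟨i, hxI, hyI⟩ := main 0 (1-fn) (1-f₀) 1 le_rfl (by linarith) (by linarith)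
            (by linarith) (by linarith) le_rfl
          obtain ⟨K, J, hc1, hc2, hc3, hK, hJ⟩ := key_counts α ρ₁ γ ρ₂ hα hγ hρ₁ hρ₂ i n
          rw [← hk₀, ← hfn] at hK
          rw [if_neg (by linarith [hxI.2] : ¬(1 - fn ≤ Int.fract (ρ₁ + i*α)))] at hK
          have hKr : (K:ℝ) = (k₀:ℝ) := by rw [hK]; push_cast; ring
          rw [hKr, floor_fract_add _ _ (Int.fract_nonneg _) (Int.fract_lt_one _),
            ← hj₀, ← hf₀] at hJ
          rw [if_pos (by linarith [hyI.1])] at hJ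
          refine ⟨i, ?_⟩
          rw [hB]
          simp only [Prod.mk.injEq]
          refine ⟨?_, ?_, ?_⟩ <;> omega
        · obtain ⟨i, hxI, hyI⟩ := main (1-fn) 1 0 (1-f₁) (by linarith) (by linarith) le_rfl
            le_rfl (by linarith) (by linarith)
          obtain ⟨K, J, hc1, hc2, hc3, hK, hJ⟩ := key_counts α ρ₁ γ ρ₂ hα hγ hρ₁ hρ₂ i n
          rw [← hk₀, ← hfn] at hK
          rw [if_pos (by linarith [hxI.1])] at hK
          have hKr : (K:ℝ) = (k₀:ℝ) + 1 := by rw [hK]; push_cast; ring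
          rw [hKr, floor_fract_add _ _ (Int.fract_nonneg _) (Int.fract_lt_one _),
            ← hj₁, ← hf₁] at hJ
          rw [if_neg (by linarith [hyI.2])] at hJ
          refine ⟨i, ?_⟩
          rw [hC]
          simp only [Prod.mk.injEq]
          refine ⟨?_, ?_, ?_⟩ <;> omega
        · obtain ⟨i, hxI, hyI⟩ := main (1-fn) 1 (1-f₁) 1 (by linarith) (by linarith) le_rfl
            (by linarith) (by linarith) le_rfl
          obtain ⟨K, J, hc1, hc2, hc3, hK, hJ⟩ := key_counts α ρ₁ γ ρ₂ hα hγ hρ₁ hρ₂ i n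
          rw [← hk₀, ← hfn] at hK
          rw [if_pos (by linarith [hxI.1])] at hK
          have hKr : (K:ℝ) = (k₀:ℝ) + 1 := by rw [hK]; push_cast; ring
          rw [hKr, floor_fract_add _ _ (Int.fract_nonneg _) (Int.fract_lt_one _),
            ← hj₁, ← hf₁] at hJ
          rw [if_pos (by linarith [hyI.1])] at hJ
          refine ⟨i, ?_⟩
          rw [hD]
          simp only [Prod.mk.injEq]
          refine ⟨?_, ?_, ?_⟩ <;> omega
    rw [hset]
    have hAB : A ≠ B := by rw [hA, hB]; simp only [Prod.mk.injEq, ne_eq, not_and]; intros; omega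
    have hAC : A ≠ C := by rw [hA, hC]; simp only [Prod.mk.injEq, ne_eq, not_and]; intros; omega
    have hAD : A ≠ D := by rw [hA, hD]; simp only [Prod.mk.injEq, ne_eq, not_and]; intros; omega
    have hBC : B ≠ C := by rw [hB, hC]; simp only [Prod.mk.injEq, ne_eq, not_and]; intros; omega
    have hBD : B ≠ D := by rw [hB, hD]; simp only [Prod.mk.injEq, ne_eq, not_and]; intros; omega
    have hCD : C ≠ D := by rw [hC, hD]; simp only [Prod.mk.injEq, ne_eq, not_and]; intros; omega
    rw [Set.ncard_insert_of_notMem (by simp [hAB, hAC, hAD])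
        (((Set.finite_singleton D).insert C).insert B),
      Set.ncard_insert_of_notMem (by simp [hBC, hBD]) ((Set.finite_singleton D).insert C),
      Set.ncard_insert_of_notMem (by simp [hCD]) (Set.finite_singleton D),
      Set.ncard_singleton]
  · -- the case 1 ≤ n ≤ ⌊1/α⌋
    intro hn1 hn2
    have hfl : (n:ℝ) ≤ 1/α := by
      have h := (Nat.le_floor_iff (by positivity : (0:ℝ) ≤ 1/α)).1 hn2
      exact_mod_cast h
    have hnα1 : (n:ℝ)*α ≤ 1 := by
      have h := mul_le_mul_of_nonneg_right hfl hα0.le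
      rwa [one_div_mul_cancel (ne_of_gt hα0)] at h
    have hnpos : (0:ℝ) < n := by exact_mod_cast hn1
    have hnα0 : 0 < (n:ℝ)*α := by positivity
    have hfn0 : 0 < Int.fract ((n:ℝ)*α) := fract_na_pos α γ hindep n hn1
    have hnαlt : (n:ℝ)*α < 1 := by
      rcases lt_or_eq_of_le hnα1 with h | h
      · exact h
      · exfalso
        rw [h, Int.fract_one] at hfn0
        exact lt_irrefl 0 hfn0
    have hflr0 : ⌊(n:ℝ)*α⌋ = 0 := by
      rw [Int.floor_eq_zero_iff]
      exact ⟨hnα0.le, hnαlt⟩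
    have hfneq : Int.fract ((n:ℝ)*α) = (n:ℝ)*α := Int.fract_eq_self.2 ⟨hnα0.le, hnαlt⟩
    have hγf : Int.fract γ = γ := Int.fract_eq_self.2 ⟨hγ0.le, hγ1⟩
    have hγfl : ⌊γ⌋ = 0 := by
      rw [Int.floor_eq_zero_iff]
      exact ⟨hγ0.le, hγ1⟩
    set A : ℕ × ℕ × ℕ := (n, 0, 0) with hA
    set B : ℕ × ℕ × ℕ := (n-1, 1, 0) with hB
    set C : ℕ × ℕ × ℕ := (n-1, 0, 1) with hC
    have hset : {p : ℕ × ℕ × ℕ | ∃ i,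
          p = ((fac (colour (sturmian α ρ₁) (fun _ => 1) (sturmian23 γ ρ₂)) i n).count 1,
               (fac (colour (sturmian α ρ₁) (fun _ => 1) (sturmian23 γ ρ₂)) i n).count 2,
               (fac (colour (sturmian α ρ₁) (fun _ => 1) (sturmian23 γ ρ₂)) i n).count 3)}
        = {A, B, C} := by
      ext pp
      simp only [Set.mem_setOf_eq, Set.mem_insert_iff, Set.mem_singleton_iff]
      constructor
      · rintro ⟨i, rfl⟩
        obtain ⟨K, J, hc1, hc2, hc3, hK, hJ⟩ := key_counts α ρ₁ γ ρ₂ hα hγ hρ₁ hρ₂ i n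
        rw [hflr0] at hK
        have hy0 : (0:ℝ) ≤ Int.fract (ρ₂ + (⌊ρ₁ + i*α⌋:ℝ)*γ) := Int.fract_nonneg _
        have hy1 : Int.fract (ρ₂ + (⌊ρ₁ + i*α⌋:ℝ)*γ) < 1 := Int.fract_lt_one _
        by_cases hx : 1 - Int.fract ((n:ℝ)*α) ≤ Int.fract (ρ₁ + i*α)
        · rw [if_pos hx] at hK
          have hKr : (K:ℝ) = 1 := by rw [hK]; push_cast; ring
          rw [hKr, one_mul, floor_fract_add _ _ hy0 hy1, hγf, hγfl] at hJ
          by_cases hy : 1 - γ ≤ Int.fract (ρ₂ + (⌊ρ₁ + i*α⌋:ℝ)*γ)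
          · rw [if_pos hy] at hJ
            right; right
            rw [hC]
            simp only [Prod.mk.injEq]
            refine ⟨?_, ?_, ?_⟩ <;> omega
          · rw [if_neg hy] at hJ
            right; left
            rw [hB]
            simp only [Prod.mk.injEq]
            refine ⟨?_, ?_, ?_⟩ <;> omega
        · rw [if_neg hx] at hK
          have hKr : (K:ℝ) = 0 := by rw [hK]; push_cast; ring
          rw [hKr, zero_mul, zero_add] at hJ
          have hJ0 : J = 0 := by
            rw [hJ, Int.floor_eq_zero_iff]
            exact ⟨hy0, hy1⟩
          left
          rw [hA]
          simp only [Prod.mk.injEq]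
          refine ⟨?_, ?_, ?_⟩ <;> omega
      · have main : ∀ a b c d : ℝ, 0 ≤ a → a < b → b ≤ 1 → 0 ≤ c → c < d → d ≤ 1 →
            ∃ i : ℕ, Int.fract (ρ₁ + i*α) ∈ Set.Ioo a b ∧
              Int.fract (ρ₂ + (⌊ρ₁ + i*α⌋ : ℝ)*γ) ∈ Set.Ioo c d :=
          fun a b c d h1 h2 h3 h4 h5 h6 =>
            density_pair α ρ₁ γ ρ₂ hα hγ hindep a b c d h1 h2 h3 h4 h5 h6
        rintro (rfl | rfl | rfl)
        · obtain ⟨i, hxI, hyI⟩ := main 0 (1-(n:ℝ)*α) 0 1 le_rfl (by linarith) (by linarith)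
            le_rfl (by norm_num) le_rfl
          obtain ⟨K, J, hc1, hc2, hc3, hK, hJ⟩ := key_counts α ρ₁ γ ρ₂ hα hγ hρ₁ hρ₂ i n
          rw [hflr0, hfneq] at hK
          rw [if_neg (by linarith [hxI.2] : ¬(1 - (n:ℝ)*α ≤ Int.fract (ρ₁ + i*α)))] at hK
          have hKr : (K:ℝ) = 0 := by rw [hK]; push_cast; ring
          rw [hKr, zero_mul, zero_add] at hJ
          have hJ0 : J = 0 := by
            rw [hJ, Int.floor_eq_zero_iff]
            exact ⟨Int.fract_nonneg _, Int.fract_lt_one _⟩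
          refine ⟨i, ?_⟩
          rw [hA]
          simp only [Prod.mk.injEq]
          refine ⟨?_, ?_, ?_⟩ <;> omega
        · obtain ⟨i, hxI, hyI⟩ := main (1-(n:ℝ)*α) 1 0 (1-γ) (by linarith) (by linarith) le_rfl
            le_rfl (by linarith) (by linarith)
          obtain ⟨K, J, hc1, hc2, hc3, hK, hJ⟩ := key_counts α ρ₁ γ ρ₂ hα hγ hρ₁ hρ₂ i n
          rw [hflr0, hfneq] at hK
          rw [if_pos (by linarith [hxI.1])] at hK
          have hKr : (K:ℝ) = 1 := by rw [hK]; push_cast; ring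
          rw [hKr, one_mul, floor_fract_add _ _ (Int.fract_nonneg _) (Int.fract_lt_one _),
            hγf, hγfl] at hJ
          rw [if_neg (by linarith [hyI.2])] at hJ
          refine ⟨i, ?_⟩
          rw [hB]
          simp only [Prod.mk.injEq]
          refine ⟨?_, ?_, ?_⟩ <;> omega
        · obtain ⟨i, hxI, hyI⟩ := main (1-(n:ℝ)*α) 1 (1-γ) 1 (by linarith) (by linarith) le_rfl
            (by linarith) (by linarith) le_rfl
          obtain ⟨K, J, hc1, hc2, hc3, hK, hJ⟩ := key_counts α ρ₁ γ ρ₂ hα hγ hρ₁ hρ₂ i n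
          rw [hflr0, hfneq] at hK
          rw [if_pos (by linarith [hxI.1])] at hK
          have hKr : (K:ℝ) = 1 := by rw [hK]; push_cast; ring
          rw [hKr, one_mul, floor_fract_add _ _ (Int.fract_nonneg _) (Int.fract_lt_one _),
            hγf, hγfl] at hJ
          rw [if_pos (by linarith [hyI.1])] at hJ
          refine ⟨i, ?_⟩
          rw [hC]
          simp only [Prod.mk.injEq]
          refine ⟨?_, ?_, ?_⟩ <;> omega
    rw [hset]
    have hAB : A ≠ B := by rw [hA, hB]; simp only [Prod.mk.injEq, ne_eq, not_and]; intros; omega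
    have hAC : A ≠ C := by rw [hA, hC]; simp only [Prod.mk.injEq, ne_eq, not_and]; intros; omega
    have hBC : B ≠ C := by rw [hB, hC]; simp only [Prod.mk.injEq, ne_eq, not_and]; intros; omega
    rw [Set.ncard_insert_of_notMem (by simp [hAB, hAC])
        ((Set.finite_singleton C).insert B),
      Set.ncard_insert_of_notMem (by simp [hBC]) (Set.finite_singleton C),
      Set.ncard_singleton]
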